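/- Let k ≥ 1 and d ≥ 1 with q ≥ d ≥ 1 and s ≥ 0 real numbers (or with q ≥ s). Define C_k(t_1,...,t_k) = ∑_{∑ i·c_i = k} N(c_1,...,c_k) t_1^{c_1}···t_k^{c_k}, where N(c_1,...,c_k) is the number of permutations in S_k of cycle type (c_1,...,c_k). If t_i = q for d | i and t_i = s for d ∤ i, then C_k(t_1,...,t_k) = k! ∑_{i=0}^{⌊k/d⌋} \binom{(q-s)/d + i - 1}{i} \binom{s + k - d i - 1}{k - d i}. -/

import Mathlib

/-- The full cycle type of a permutation of `Fin k` (fixed points counted as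
1-cycles). -/
def fullCycleType {k : ℕ} (σ : Equiv.Perm (Fin k)) : Multiset ℕ :=
  σ.cycleType + Multiset.replicate (k - σ.support.card) 1

/-- `N(c_1, …, c_k)`: the number of permutations in `S_k` whose cycle type is the
partition `P`. -/
noncomputable def permCountOfType {k : ℕ} (P : Nat.Partition k) : ℕ :=
  Nat.card {σ : Equiv.Perm (Fin k) // fullCycleType σ = P.parts}

/-- Generalised binomial coefficient with real upper argument, defined via the
falling factorial. -/
noncomputable def genBinom (x : ℝ) (i : ℕ) : ℝ :=
  (∏ j ∈ Finset.range i, (x - j)) / (i.factorial : ℝ)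

open Equiv Equiv.Perm Finset

namespace LiWan
noncomputable def aa (u : ℝ) (i : ℕ) : ℝ := genBinom (u + i - 1) i

lemma genBinom_zero (x : ℝ) : genBinom x 0 = 1 := by simp [genBinom]

lemma genBinom_succ_ratio (x : ℝ) (i : ℕ) :
    ((i : ℝ) + 1) * genBinom (x + 1) (i + 1) = (x + 1) * genBinom x i := by
  have key : ∏ j ∈ Finset.range (i + 1), (x + 1 - j) = (x + 1) * ∏ j ∈ Finset.range i, (x - j) := by
    rw [Finset.prod_range_succ']
    rw [mul_comm]
    congr 1
    · push_cast; ring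
    · apply Finset.prod_congr rfl
      intro j _
      push_cast; ring
  unfold genBinom
  rw [key, Nat.factorial_succ]
  have h : (i.factorial : ℝ) ≠ 0 := by positivity
  push_cast
  field_simp

lemma aa_zero (u : ℝ) : aa u 0 = 1 := by simp [aa, genBinom]

lemma aa_succ (u : ℝ) (i : ℕ) : ((i : ℝ) + 1) * aa u (i + 1) = (u + i) * aa u i := by
  have h := genBinom_succ_ratio (u + i - 1) i
  have h1 : u + (i : ℝ) - 1 + 1 = u + i := by ring
  rw [h1] at h
  simpa [aa, Nat.cast_add, Nat.cast_one, show u + ((i : ℝ) + 1) - 1 = u + i by ring] using h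

lemma aa_mul_sum (u : ℝ) (i : ℕ) : (i : ℝ) * aa u i = u * ∑ j ∈ Finset.range i, aa u j := by
  induction i with
  | zero => simp
  | succ n ih =>
      have h := aa_succ u n
      rw [Finset.sum_range_succ, mul_add, ← ih]
      push_cast
      linarith [h]

noncomputable def Rr (q s : ℝ) (d : ℕ) (m : ℕ) : ℝ :=
  ∑ i ∈ Finset.range (m / d + 1), aa ((q - s) / d) i * aa s (m - d * i)

lemma le_div_iff' {d i m : ℕ} (hd : 0 < d) : i ≤ m / d ↔ d * i ≤ m := by
  rw [Nat.le_div_iff_mul_le hd, mul_comm]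

variable (q s : ℝ) (d : ℕ)

lemma Rr_zero : Rr q s d 0 = 1 := by simp [Rr, aa, genBinom]

lemma sigma1 (hd : 0 < d) (m : ℕ) :
    ∑ i ∈ Finset.range (m / d + 1), (∑ j ∈ Finset.range i, aa ((q-s)/d) j) * aa s (m - d * i)
      = ∑ j' ∈ Finset.range (m / d), Rr q s d (m - d * (j' + 1)) := by
  simp_rw [Finset.sum_mul]
  rw [Finset.sum_sigma']
  unfold Rr
  rw [Finset.sum_sigma']
  refine Finset.sum_nbij' (fun p => ⟨p.1 - p.2 - 1, p.2⟩) (fun p => ⟨p.1 + 1 + p.2, p.2⟩) ?_ ?_ ?_ ?_ ?_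
  · rintro ⟨i, j⟩ hm
    simp only [Finset.mem_sigma, Finset.mem_range, Nat.lt_succ_iff, le_div_iff' hd] at hm ⊢
    obtain ⟨hi, hj⟩ := hm
    have e1 : i - j - 1 + 1 = i - j := by omega
    have e2 : d * (i - j) = d * i - d * j := Nat.mul_sub d i j
    have e3 : d * j ≤ d * i := Nat.mul_le_mul_left d (by omega)
    constructor
    · rw [Nat.lt_iff_add_one_le, le_div_iff' hd, e1, e2]
      omega
    · rw [e1, e2]
      omega
  · rintro ⟨j', i'⟩ hm
    simp only [Finset.mem_sigma, Finset.mem_range, Nat.lt_succ_iff, le_div_iff' hd] at hm ⊢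
    rw [Nat.lt_iff_add_one_le, le_div_iff' hd] at hm
    obtain ⟨hj', hi'⟩ := hm
    have e1 : d * (j' + 1 + i') = d * (j' + 1) + d * i' := by ring
    omega
  · rintro ⟨i, j⟩ hm
    simp only [Finset.mem_sigma, Finset.mem_range, Nat.lt_succ_iff] at hm
    dsimp only
    have : i - j - 1 + 1 + j = i := by omega
    rw [this]
  · rintro ⟨j', i'⟩ hm
    dsimp only
    have : j' + 1 + i' - i' - 1 = j' := by omega
    rw [this]
  · rintro ⟨i, j⟩ hm
    simp only [Finset.mem_sigma, Finset.mem_range, Nat.lt_succ_iff, le_div_iff' hd] at hm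
    obtain ⟨hi, hj⟩ := hm
    have e1 : i - j - 1 + 1 = i - j := by omega
    have e2 : d * (i - j) = d * i - d * j := Nat.mul_sub d i j
    have e3 : d * j ≤ d * i := Nat.mul_le_mul_left d (by omega)
    have : m - d * (i - j - 1 + 1) - d * j = m - d * i := by rw [e1, e2]; omega
    simp only [this]

lemma sigma2 (hd : 0 < d) (m : ℕ) :
    ∑ i ∈ Finset.range (m / d + 1), aa ((q-s)/d) i * (∑ j ∈ Finset.range (m - d * i), aa s j)
      = ∑ j' ∈ Finset.range m, Rr q s d j' := by
  simp_rw [Finset.mul_sum]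
  rw [Finset.sum_sigma']
  unfold Rr
  rw [Finset.sum_sigma']
  refine Finset.sum_nbij' (fun p => ⟨d * p.1 + p.2, p.1⟩) (fun p => ⟨p.2, p.1 - d * p.2⟩) ?_ ?_ ?_ ?_ ?_
  · rintro ⟨i, j⟩ hm
    simp only [Finset.mem_sigma, Finset.mem_range, Nat.lt_succ_iff, le_div_iff' hd] at hm ⊢
    omega
  · rintro ⟨j', i'⟩ hm
    simp only [Finset.mem_sigma, Finset.mem_range, Nat.lt_succ_iff, le_div_iff' hd] at hm ⊢
    omega
  · rintro ⟨i, j⟩ hm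
    dsimp only
    have : d * i + j - d * i = j := by omega
    rw [this]
  · rintro ⟨j', i'⟩ hm
    simp only [Finset.mem_sigma, Finset.mem_range, Nat.lt_succ_iff, le_div_iff' hd] at hm
    dsimp only
    have : d * i' + (j' - d * i') = j' := by omega
    rw [this]
  · rintro ⟨i, j⟩ hm
    have : d * i + j - d * i = j := by omega
    simp only [this]

lemma Rr_recur (hd : 0 < d) (m : ℕ) :
    (m : ℝ) * Rr q s d m =
      (q - s) * ∑ j ∈ Finset.range (m / d), Rr q s d (m - d * (j + 1)) +
        s * ∑ j ∈ Finset.range m, Rr q s d j := by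
  have hdr : (d : ℝ) ≠ 0 := by positivity
  rw [← sigma1 q s d hd m, ← sigma2 q s d hd m]
  unfold Rr
  rw [Finset.mul_sum, Finset.mul_sum, Finset.mul_sum, ← Finset.sum_add_distrib]
  apply Finset.sum_congr rfl
  intro i hi
  simp only [Finset.mem_range, Nat.lt_succ_iff, le_div_iff' hd] at hi
  have hcast : (m : ℝ) = (d * i : ℕ) + ((m - d * i : ℕ) : ℝ) := by
    push_cast [Nat.cast_sub hi]
    ring
  rw [hcast]
  have h1 : ((d * i : ℕ) : ℝ) * aa ((q-s)/d) i = (q - s) * ∑ j ∈ Finset.range i, aa ((q-s)/d) j := by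
    push_cast
    rw [mul_assoc, aa_mul_sum]
    field_simp
  have h2 : ((m - d * i : ℕ) : ℝ) * aa s (m - d * i) = s * ∑ j ∈ Finset.range (m - d * i), aa s j :=
    aa_mul_sum s (m - d * i)
  calc (((d * i : ℕ) : ℝ) + ((m - d * i : ℕ) : ℝ)) * (aa ((q-s)/d) i * aa s (m - d * i))
      = (((d * i : ℕ) : ℝ) * aa ((q-s)/d) i) * aa s (m - d * i)
        + aa ((q-s)/d) i * (((m - d * i : ℕ) : ℝ) * aa s (m - d * i)) := by ring
    _ = _ := by rw [h1, h2]; ring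

noncomputable def Wt (t : ℕ → ℝ) {α : Type*} [Fintype α] [DecidableEq α] (σ : Perm α) : ℝ :=
  ((σ.cycleType + Multiset.replicate (Fintype.card α - σ.cycleType.sum) 1).map t).prod

noncomputable def Ft (t : ℕ → ℝ) (m : ℕ) : ℝ := ∑ σ : Perm (Fin m), Wt t σ

lemma cycleType_permCongr {α β : Type*} [Fintype α] [DecidableEq α] [Fintype β] [DecidableEq β]
    (e : α ≃ β) (σ : Perm α) : (e.permCongr σ).cycleType = σ.cycleType := by
  have hp : ∀ b : β, (fun _ : β => True) b := fun _ => trivial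
  have key : e.permCongr σ = σ.extendDomain (e.trans (Equiv.subtypeUnivEquiv hp).symm) := by
    ext b
    rw [Equiv.Perm.extendDomain_apply_subtype _ _ (hp b)]
    simp [Equiv.subtypeUnivEquiv]
  rw [key, Equiv.Perm.cycleType_extendDomain]

lemma Wt_eq_of_cycleType {t : ℕ → ℝ} {α β : Type*} [Fintype α] [DecidableEq α] [Fintype β]
    [DecidableEq β] {σ : Perm α} {τ : Perm β} (h : σ.cycleType = τ.cycleType)
    (hc : Fintype.card α = Fintype.card β) : Wt t σ = Wt t τ := by
  unfold Wt
  rw [h, hc]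

lemma sum_Wt_eq_Ft (t : ℕ → ℝ) (α : Type*) [Fintype α] [DecidableEq α] :
    ∑ σ : Perm α, Wt t σ = Ft t (Fintype.card α) := by
  unfold Ft
  rw [← Equiv.sum_comp (Fintype.equivFin α).permCongr (Wt t)]
  apply Finset.sum_congr rfl
  intro σ _
  exact (Wt_eq_of_cycleType (cycleType_permCongr _ σ) (by simp)).symm

variable {β : Type*} [Fintype β] [DecidableEq β]

lemma commute_fullCycle_iff {c₀ : Perm β} (hc : c₀.IsCycle) (hsupp : c₀.support = Finset.univ)
    (g : Perm β) : Commute g c₀ ↔ g ∈ Subgroup.zpowers c₀ := by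
  constructor
  · intro h
    obtain ⟨hc', hmem⟩ := (hc.commute_iff).mp h
    convert hmem using 1
    ext y
    have hy : y ∈ c₀.support := by rw [hsupp]; exact Finset.mem_univ y
    rw [Equiv.Perm.ofSubtype_subtypePerm_of_mem hc' hy]
  · rintro ⟨k, rfl⟩
    exact (Commute.refl c₀).zpow_left k

lemma card_fullCycles (n : ℕ) (hn : 2 ≤ n) (hcard : Fintype.card β = n) :
    (Finset.univ.filter fun c : Perm β => c.cycleType = {n}).card * n = n.factorial := by
  -- a distinguished full cycle
  obtain ⟨m, rfl⟩ : ∃ m, n = m + 2 := ⟨n - 2, by omega⟩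
  set n := m + 2
  have e : Fin n ≃ β := (Fintype.equivFinOfCardEq hcard).symm
  set c₀ : Perm β := e.permCongr (finRotate n) with hc₀
  have hct : c₀.cycleType = {n} := by
    rw [hc₀, cycleType_permCongr, (isCycle_finRotate).cycleType, support_finRotate]
    simp
    rfl

  have hcyc : c₀.IsCycle := card_cycleType_eq_one.mp (by rw [hct]; rfl)
  have hsc : c₀.support.card = n := by
    have := c₀.sum_cycleType
    rw [hct] at this
    simpa using this.symm
  have hsupp : c₀.support = Finset.univ := (Finset.card_eq_iff_eq_univ _).mp (by rw [hsc, hcard])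
  have horder : orderOf c₀ = n := by rw [hcyc.orderOf, hsc]
  -- the filter is the conjugation orbit of c₀
  have hset : ((Finset.univ.filter fun c : Perm β => c.cycleType = {n}) : Set (Perm β))
      = MulAction.orbit (ConjAct (Perm β)) c₀ := by
    ext c
    simp only [Finset.coe_filter, Finset.mem_univ, true_and, Set.mem_setOf_eq,
      ConjAct.mem_orbit_conjAct]
    constructor
    · intro h
      exact isConj_of_cycleType_eq (h.trans hct.symm)
    · intro h
      obtain ⟨g, hg⟩ := isConj_iff.mp h
      rw [← Equiv.Perm.cycleType_conj (σ := c) (τ := g), hg, hct]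
  -- stabilizer is the cyclic group generated by c₀
  have hstab : ∀ g : ConjAct (Perm β),
      g ∈ MulAction.stabilizer (ConjAct (Perm β)) c₀ ↔ ConjAct.ofConjAct g ∈ Subgroup.zpowers c₀ := by
    intro g
    rw [MulAction.mem_stabilizer_iff, ConjAct.smul_def, ← commute_fullCycle_iff hcyc hsupp]
    constructor
    · intro h
      exact mul_inv_eq_iff_eq_mul.mp h
    · intro h
      rw [h.eq, mul_inv_cancel_right]
  -- orbit-stabilizer
  have key : Nat.card (Perm β) =
      Nat.card (MulAction.orbit (ConjAct (Perm β)) c₀) *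
        Nat.card (MulAction.stabilizer (ConjAct (Perm β)) c₀) := by
    have h := Subgroup.card_eq_card_quotient_mul_card_subgroup
      (MulAction.stabilizer (ConjAct (Perm β)) c₀)
    have h2 : Nat.card (ConjAct (Perm β)) = Nat.card (Perm β) := rfl
    rw [h2] at h
    rw [h]
    congr 1
    exact (Nat.card_congr (MulAction.orbitEquivQuotientStabilizer (ConjAct (Perm β)) c₀)).symm
  have hstabcard : Nat.card (MulAction.stabilizer (ConjAct (Perm β)) c₀) = n := by
    rw [← horder, ← Nat.card_zpowers c₀]
    apply Nat.card_congr
    exact Equiv.subtypeEquiv (ConjAct.ofConjAct (G := Perm β)).toEquiv hstab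
  have horb : Nat.card (MulAction.orbit (ConjAct (Perm β)) c₀)
      = (Finset.univ.filter fun c : Perm β => c.cycleType = {n}).card := by
    rw [← hset, Nat.card_coe_set_eq, Set.ncard_coe_finset]
  rw [horb, hstabcard] at key
  rw [← key, Nat.card_eq_fintype_card, Fintype.card_perm, hcard]

variable {β : Type*} [Fintype β] [DecidableEq β]

lemma ofSubtype_subtypePerm_eq {p : β → Prop} [DecidablePred p] {c : Perm β}
    (h : ∀ y, p y ↔ p (c y)) (hs : ∀ y, ¬ p y → c y = y) :
    Equiv.Perm.ofSubtype (c.subtypePerm (fun y => (h y).symm)) = c := by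
  ext y
  by_cases hy : p y
  · rw [Equiv.Perm.ofSubtype_subtypePerm_of_mem (fun y => (h y).symm) hy]
  · rw [Equiv.Perm.ofSubtype_apply_of_not_mem _ hy]
    exact (hs y hy).symm

lemma cycleType_ofSubtype' {p : β → Prop} [DecidablePred p] [ft : Fintype (Subtype p)]
    (g : Perm (Subtype p)) : (Equiv.Perm.ofSubtype g).cycleType = g.cycleType := by
  have h := Equiv.Perm.cycleType_ofSubtype (g := g)
  convert h using 2

lemma support_card_ofSubtype' {p : β → Prop} [DecidablePred p] [ft : Fintype (Subtype p)]
    (g : Perm (Subtype p)) : ((Equiv.Perm.ofSubtype g).support).card = g.support.card := by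
  rw [← Equiv.Perm.sum_cycleType, ← Equiv.Perm.sum_cycleType, cycleType_ofSubtype']

/-- number of cycles through `x` with support-with-x equal to `A` -/
lemma card_D (A : Finset β) (x : β) (hx : x ∈ A) :
    (Finset.univ.filter fun c : Perm β => c.cycleOf x = c ∧ c.support ∪ {x} = A).card
      = (A.card - 1).factorial := by
  classical
  rcases eq_or_lt_of_le (Finset.one_le_card.mpr ⟨x, hx⟩) with h1 | h2
  · -- A = {x}
    obtain ⟨y, hy⟩ := Finset.card_eq_one.mp h1.symm
    have hxy : A = {x} := by
      rw [hy] at hx ⊢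
      simp only [Finset.mem_singleton] at hx
      rw [hx]
    have : (Finset.univ.filter fun c : Perm β => c.cycleOf x = c ∧ c.support ∪ {x} = A) = {1} := by
      ext c
      simp only [Finset.mem_filter, Finset.mem_univ, true_and, Finset.mem_singleton, hxy]
      constructor
      · rintro ⟨hc1, hc2⟩
        have hsub : c.support ⊆ {x} := by
          intro y hy'
          have : y ∈ c.support ∪ {x} := Finset.mem_union_left _ hy'
          rwa [hc2] at this
        have hcard : c.support.card ≤ 1 := le_trans (Finset.card_le_card hsub) (by simp)
        have : c.support.card = 0 := by
          rcases Nat.lt_or_ge c.support.card 1 with h | h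
          · omega
          · exact absurd (le_antisymm hcard h) (c.card_support_ne_one)
        rw [Finset.card_eq_zero] at this
        exact Equiv.Perm.support_eq_empty_iff.mp this
      · rintro rfl
        constructor
        · exact Equiv.Perm.cycleOf_one x
        · rw [Equiv.Perm.support_one]; simp
    rw [this, ← h1]
    simp
  · -- 2 ≤ A.card
    have hfilter : (Finset.univ.filter fun c : Perm β => c.cycleOf x = c ∧ c.support ∪ {x} = A)
        = Finset.univ.filter fun c : Perm β => c.IsCycle ∧ c.support = A := by
      ext c
      simp only [Finset.mem_filter, Finset.mem_univ, true_and]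
      constructor
      · rintro ⟨hc1, hc2⟩
        have hne : c ≠ 1 := by
          rintro rfl
          rw [Equiv.Perm.support_one] at hc2
          simp only [Finset.empty_union] at hc2
          have := congrArg Finset.card hc2
          simp at this
          omega
        have hcx : c x ≠ x := by
          intro h
          exact hne (by rw [← hc1, Equiv.Perm.cycleOf_eq_one_iff]; exact h)
        have hcyc : c.IsCycle := by
          rw [← hc1]; exact Equiv.Perm.isCycle_cycleOf c hcx
        refine ⟨hcyc, ?_⟩
        rw [← hc2]
        have hxs : x ∈ c.support := Equiv.Perm.mem_support.mpr hcx
        exact (Finset.union_eq_left.mpr (by simpa using hxs)).symm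
      · rintro ⟨hcyc, hsupp⟩
        have hcx : c x ≠ x := Equiv.Perm.mem_support.mp (by rw [hsupp]; exact hx)
        refine ⟨hcyc.cycleOf_eq hcx, ?_⟩
        rw [hsupp]
        exact Finset.union_eq_left.mpr (by simpa using hx)
    rw [hfilter]
    -- biject with full-support cycles on the subtype
    have hcardA : Fintype.card {y // y ∈ A} = A.card := Fintype.card_coe A
    have hbij : (Finset.univ.filter fun c : Perm β => c.IsCycle ∧ c.support = A).card
        = (Finset.univ.filter fun c' : Perm {y // y ∈ A} => c'.cycleType = {A.card}).card := by
      apply Finset.card_nbij'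
        (i := fun c => if h : ∀ y, y ∈ A ↔ c y ∈ A then c.subtypePerm (fun y => (h y).symm) else 1)
        (j := fun c' => Equiv.Perm.ofSubtype c')
      · rintro c hc
        simp only [Finset.mem_coe, Finset.mem_filter, Finset.mem_univ, true_and] at hc ⊢
        obtain ⟨hcyc, hsupp⟩ := hc
        have h : ∀ y, y ∈ A ↔ c y ∈ A := by
          intro y
          rw [← hsupp]
          exact Equiv.Perm.apply_mem_support.symm
        rw [dif_pos h]
        have hof : Equiv.Perm.ofSubtype (c.subtypePerm (fun y => (h y).symm)) = c := by
          apply ofSubtype_subtypePerm_eq h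
          intro y hy
          exact Equiv.Perm.notMem_support.mp (fun hm => hy (hsupp ▸ hm))
        rw [← cycleType_ofSubtype' (c.subtypePerm (fun y => (h y).symm)), hof, hcyc.cycleType, hsupp]
      · rintro c' hc'
        simp only [Finset.mem_coe, Finset.mem_filter, Finset.mem_univ, true_and] at hc' ⊢
        have hct : (Equiv.Perm.ofSubtype c').cycleType = {A.card} :=
          (cycleType_ofSubtype' c').trans hc'
        have hcyc : (Equiv.Perm.ofSubtype c').IsCycle :=
          Equiv.Perm.card_cycleType_eq_one.mp (by rw [hct]; rfl)
        refine ⟨hcyc, ?_⟩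
        have hsub : (Equiv.Perm.ofSubtype c').support ⊆ A := by
          intro y hy
          by_contra hyA
          rw [Equiv.Perm.mem_support, Equiv.Perm.ofSubtype_apply_of_not_mem _ hyA] at hy
          exact hy rfl
        have hsc' : c'.support.card = A.card := by
          have h2 := c'.sum_cycleType
          rw [hc'] at h2
          simpa using h2.symm
        have hcards : (Equiv.Perm.ofSubtype c').support.card = A.card := by
          rw [support_card_ofSubtype', hsc']
        exact Finset.eq_of_subset_of_card_le hsub (by rw [hcards])
      · rintro c hc
        simp only [Finset.mem_coe, Finset.mem_filter, Finset.mem_univ, true_and] at hc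
        obtain ⟨hcyc, hsupp⟩ := hc
        have h : ∀ y, y ∈ A ↔ c y ∈ A := by
          intro y
          rw [← hsupp]
          exact Equiv.Perm.apply_mem_support.symm
        dsimp only
        rw [dif_pos h]
        apply ofSubtype_subtypePerm_eq h
        intro y hy
        exact Equiv.Perm.notMem_support.mp (fun hm => hy (hsupp ▸ hm))
      · rintro c' hc'
        have h : ∀ y, y ∈ A ↔ (Equiv.Perm.ofSubtype c') y ∈ A := by
          intro y
          by_cases hy : y ∈ A
          · simp only [hy, true_iff]
            have := Equiv.Perm.ofSubtype_apply_of_mem c' hy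
            rw [this]
            exact (c' ⟨y, hy⟩).2
          · rw [Equiv.Perm.ofSubtype_apply_of_not_mem _ hy]
        dsimp only
        rw [dif_pos h]
        exact Equiv.Perm.subtypePerm_ofSubtype c'
    rw [hbij]
    have hkey := card_fullCycles (β := {y // y ∈ A}) A.card h2 hcardA
    have hfac : A.card.factorial = A.card * (A.card - 1).factorial := by
      have : A.card = (A.card - 1) + 1 := by omega
      rw [this, Nat.factorial_succ]
      congr 1 <;> omega
    rw [hfac] at hkey
    have hpos : 0 < A.card := by omega
    exact Nat.eq_of_mul_eq_mul_left hpos (by linarith [hkey])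

variable {β : Type*} [Fintype β] [DecidableEq β]

lemma inner_sum (t : ℕ → ℝ) (x : β) (A : Finset β) (hx : x ∈ A) :
    ∑ σ ∈ Finset.univ.filter (fun σ : Perm β => (σ.cycleOf x).support ∪ {x} = A), Wt t σ
      = (A.card - 1).factorial * (t A.card * Ft t (Fintype.card β - A.card)) := by
  classical
  set D := Finset.univ.filter
    (fun c : Perm β => c.cycleOf x = c ∧ c.support ∪ {x} = A) with hDdef
  set E := Finset.univ.filter (fun ρ : Perm β => ∀ y ∈ A, ρ y = y) with hEdef
  -- facts about members of D
  have hDsupp : ∀ c ∈ D, c.support ⊆ A := by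
    intro c hc
    rw [hDdef, Finset.mem_filter] at hc
    exact hc.2.2 ▸ Finset.subset_union_left
  have hDsupp' : ∀ ρ ∈ E, ρ.support ⊆ Aᶜ := by
    intro ρ hρ
    rw [hEdef, Finset.mem_filter] at hρ
    intro y hy
    rw [Finset.mem_compl]
    intro hyA
    exact (Equiv.Perm.mem_support.mp hy) (hρ.2 y hyA)
  have hdisj : ∀ c ∈ D, ∀ ρ ∈ E, ρ.Disjoint c := by
    intro c hc ρ hρ
    rw [Equiv.Perm.disjoint_iff_disjoint_support]
    rw [Finset.disjoint_left]
    intro y hyρ hyc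
    exact Finset.mem_compl.mp (hDsupp' ρ hρ hyρ) (hDsupp c hc hyc)
  -- key: cycleOf of the recombination
  have hclaim : ∀ c ∈ D, ∀ ρ ∈ E, (ρ * c).cycleOf x = c := by
    intro c hc ρ hρ
    have hcomm := (hdisj c hc ρ hρ).commute
    rw [hcomm.eq]
    rw [Equiv.Perm.cycleOf_mul_of_apply_right_eq_self hcomm.symm x
      (by rw [hEdef, Finset.mem_filter] at hρ; exact hρ.2 x hx)]
    rw [hDdef, Finset.mem_filter] at hc
    exact hc.2.1
  -- step 1: reindex by pairs
  have step1 : ∑ σ ∈ Finset.univ.filter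
        (fun σ : Perm β => (σ.cycleOf x).support ∪ {x} = A), Wt t σ
      = ∑ p ∈ D ×ˢ E, Wt t (p.2 * p.1) := by
    refine Finset.sum_nbij' (i := fun σ => (σ.cycleOf x, σ * (σ.cycleOf x)⁻¹))
      (j := fun p => p.2 * p.1) ?_ ?_ ?_ ?_ ?_
    · intro σ hσ
      rw [Finset.mem_filter] at hσ
      have hσ2 := hσ.2
      rw [Finset.mem_product]
      constructor
      · rw [hDdef, Finset.mem_filter]
        refine ⟨Finset.mem_univ _, ?_, hσ2⟩
        by_cases hσx : σ x = x
        · rw [(Equiv.Perm.cycleOf_eq_one_iff (x := x) σ).mpr hσx]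
          exact Equiv.Perm.cycleOf_one x
        · exact (Equiv.Perm.isCycle_cycleOf σ hσx).cycleOf_eq
            (by rw [Equiv.Perm.cycleOf_apply_self]; exact hσx)
      · rw [hEdef, Finset.mem_filter]
        refine ⟨Finset.mem_univ _, ?_⟩
        intro y hyA
        dsimp only
        by_cases hσx : σ x = x
        · have h1 : σ.cycleOf x = 1 := (Equiv.Perm.cycleOf_eq_one_iff (x := x) σ).mpr hσx
          rw [h1]
          simp only [inv_one, mul_one]
          rw [← hσ2, h1] at hyA
          simp only [Equiv.Perm.support_one, Finset.empty_union,
            Finset.mem_singleton] at hyA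
          rw [hyA]; exact hσx
        · -- y ∈ A = supp (cycleOf σ x) ∪ {x}, and x ∈ supp
          have hxsupp : x ∈ (σ.cycleOf x).support := by
            rw [Equiv.Perm.mem_support_cycleOf_iff]
            exact ⟨Equiv.Perm.SameCycle.refl _ _, Equiv.Perm.mem_support.mpr hσx⟩
          have hy' : y ∈ (σ.cycleOf x).support := by
            rw [← hσ2] at hyA
            rcases Finset.mem_union.mp hyA with h | h
            · exact h
            · rwa [Finset.mem_singleton.mp h]
          -- compute
          have hz : (σ.cycleOf x)⁻¹ y ∈ (σ.cycleOf x).support := by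
            rw [← Equiv.Perm.support_inv]
            exact Equiv.Perm.apply_mem_support.mpr (by rwa [Equiv.Perm.support_inv])
          have hsc : σ.SameCycle x ((σ.cycleOf x)⁻¹ y) :=
            (Equiv.Perm.mem_support_cycleOf_iff.mp hz).1
          have : σ ((σ.cycleOf x)⁻¹ y) = (σ.cycleOf x) ((σ.cycleOf x)⁻¹ y) := by
            rw [Equiv.Perm.cycleOf_apply, if_pos hsc]
          simp only [Equiv.Perm.mul_apply]
          rw [this]
          simp
    · intro p hp
      simp only [Finset.mem_product] at hp
      rw [Finset.mem_filter]
      refine ⟨Finset.mem_univ _, ?_⟩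
      rw [hclaim p.1 hp.1 p.2 hp.2]
      rw [hDdef, Finset.mem_filter] at hp
      exact hp.1.2.2
    · intro σ hσ
      dsimp only
      rw [inv_mul_cancel_right]
    · intro p hp
      simp only [Finset.mem_product] at hp
      have h1 := hclaim p.1 hp.1 p.2 hp.2
      rw [h1, mul_inv_cancel_right]
    · intro σ hσ
      dsimp only
      rw [inv_mul_cancel_right]
  rw [step1]
  -- step 2: weight of a pair
  have step2 : ∀ p ∈ D ×ˢ E, Wt t (p.2 * p.1)
      = t A.card * ((p.2.cycleType + Multiset.replicate
          ((Fintype.card β - A.card) - p.2.cycleType.sum) 1).map t).prod := by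
    rintro ⟨c, ρ⟩ hp
    simp only [Finset.mem_product] at hp
    obtain ⟨hc, hρ⟩ := hp
    dsimp only
    have hsum : ρ.cycleType.sum = ρ.support.card := ρ.sum_cycleType
    have hρcard : ρ.support.card ≤ Fintype.card β - A.card := by
      have h1 := Finset.card_le_card (hDsupp' ρ hρ)
      rwa [Finset.card_compl] at h1
    have hct : (ρ * c).cycleType = ρ.cycleType + c.cycleType :=
      Equiv.Perm.Disjoint.cycleType_mul (hdisj c hc ρ hρ)
    have hAcard : 1 ≤ A.card := Finset.one_le_card.mpr ⟨x, hx⟩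
    rw [hDdef, Finset.mem_filter] at hc
    obtain ⟨-, hc1, hc2⟩ := hc
    by_cases hcx : c x = x
    · -- c = 1, A = {x}
      have hc1' : c = 1 := by rw [← hc1]; exact (Equiv.Perm.cycleOf_eq_one_iff (x := x) c).mpr hcx
      subst hc1'
      rw [Equiv.Perm.support_one, Finset.empty_union] at hc2
      have hA1 : A.card = 1 := by rw [← hc2]; simp
      have hsle : ρ.cycleType.sum ≤ Fintype.card β - 1 := by
        rw [hsum]; rw [hA1] at hρcard; exact hρcard
      have hrepl : Fintype.card β - ρ.cycleType.sum
          = ((Fintype.card β - 1) - ρ.cycleType.sum) + 1 := by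
        have hcb : 1 ≤ Fintype.card β := Fintype.card_pos_iff.mpr ⟨x⟩
        omega
      rw [mul_one]
      unfold Wt
      rw [hrepl, hA1, Multiset.replicate_succ, Multiset.add_cons, Multiset.map_cons,
        Multiset.prod_cons]
    · have hcyc : c.IsCycle := by
        rw [← hc1]; exact Equiv.Perm.isCycle_cycleOf c hcx
      have hxs : x ∈ c.support := Equiv.Perm.mem_support.mpr hcx
      have hsuppA : c.support = A := by
        rw [← hc2]
        exact (Finset.union_eq_left.mpr (by simpa using hxs)).symm
      have hctc : c.cycleType = {A.card} := by rw [hcyc.cycleType, hsuppA]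
      unfold Wt
      rw [hct, hctc]
      have hsum2 : (ρ.cycleType + ({A.card} : Multiset ℕ)).sum
          = ρ.cycleType.sum + A.card := by simp
      rw [hsum2]
      have hrepl : Fintype.card β - (ρ.cycleType.sum + A.card)
          = (Fintype.card β - A.card) - ρ.cycleType.sum := by omega
      rw [hrepl]
      have hms : (ρ.cycleType + ({A.card} : Multiset ℕ))
          + Multiset.replicate ((Fintype.card β - A.card) - ρ.cycleType.sum) 1
          = A.card ::ₘ (ρ.cycleType
            + Multiset.replicate ((Fintype.card β - A.card) - ρ.cycleType.sum) 1) := by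
        have : ({A.card} : Multiset ℕ) = A.card ::ₘ 0 := rfl
        rw [this, Multiset.add_cons, add_zero, Multiset.cons_add]
      rw [hms, Multiset.map_cons, Multiset.prod_cons]
  rw [Finset.sum_congr rfl step2]
  -- step 3: sum over E
  have hcardp : Fintype.card {y : β // y ∉ A} = Fintype.card β - A.card := by
    rw [Fintype.card_subtype_compl]
    congr 1
    exact Fintype.card_coe A
  have hE' : ∑ ρ ∈ E, ((ρ.cycleType + Multiset.replicate
        ((Fintype.card β - A.card) - ρ.cycleType.sum) 1).map t).prod
      = Ft t (Fintype.card β - A.card) := by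
    rw [← hcardp, ← sum_Wt_eq_Ft t {y : β // y ∉ A}]
    refine Finset.sum_nbij'
      (i := fun ρ => if h : ∀ y, (y ∉ A) ↔ (ρ y ∉ A) then ρ.subtypePerm (fun y => (h y).symm) else 1)
      (j := fun ρ' => Equiv.Perm.ofSubtype ρ') ?_ ?_ ?_ ?_ ?_
    · intro ρ _
      exact Finset.mem_univ _
    · intro ρ' _
      rw [hEdef, Finset.mem_filter]
      refine ⟨Finset.mem_univ _, ?_⟩
      intro y hy
      exact Equiv.Perm.ofSubtype_apply_of_not_mem ρ' (by simp [hy])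
    · intro ρ hρ
      rw [hEdef, Finset.mem_filter] at hρ
      have hfix := hρ.2
      have hinv : ∀ y, (y ∉ A) ↔ (ρ y ∉ A) := by
        intro y
        constructor
        · intro hy hc
          have h2 : ρ y = y := ρ.injective (hfix _ hc)
          rw [h2] at hc
          exact hy hc
        · intro hy hyA
          exact hy (by rw [hfix y hyA]; exact hyA)
      rw [dif_pos hinv]
      exact ofSubtype_subtypePerm_eq hinv (fun y hy => hfix y (not_not.mp hy))
    · intro ρ' _
      have hinv : ∀ y, (y ∉ A) ↔ ((Equiv.Perm.ofSubtype ρ') y ∉ A) := by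
        intro y
        by_cases hy : y ∈ A
        · rw [Equiv.Perm.ofSubtype_apply_of_not_mem ρ' (by simp [hy])]
        · simp only [hy, not_false_iff, true_iff]
          have := Equiv.Perm.ofSubtype_apply_of_mem ρ' hy
          rw [this]
          exact (ρ' ⟨y, hy⟩).2
      rw [dif_pos hinv]
      exact Equiv.Perm.subtypePerm_ofSubtype ρ'
    · intro ρ hρ
      rw [hEdef, Finset.mem_filter] at hρ
      have hfix := hρ.2
      have hinv : ∀ y, (y ∉ A) ↔ (ρ y ∉ A) := by
        intro y
        constructor
        · intro hy hc
          have h2 : ρ y = y := ρ.injective (hfix _ hc)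
          rw [h2] at hc
          exact hy hc
        · intro hy hyA
          exact hy (by rw [hfix y hyA]; exact hyA)
      rw [dif_pos hinv]
      have hof : Equiv.Perm.ofSubtype (ρ.subtypePerm (fun y => (hinv y).symm)) = ρ :=
        ofSubtype_subtypePerm_eq hinv (fun y hy => hfix y (not_not.mp hy))
      have hcty : (ρ.subtypePerm (fun y => (hinv y).symm)).cycleType = ρ.cycleType :=
        (cycleType_ofSubtype' (ρ.subtypePerm (fun y => (hinv y).symm))).symm.trans (congrArg cycleType hof)
      unfold Wt
      rw [hcty, hcardp]
  rw [Finset.sum_product]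
  have hrow : ∀ c ∈ D, (∑ ρ ∈ E, t A.card * ((ρ.cycleType + Multiset.replicate
        ((Fintype.card β - A.card) - ρ.cycleType.sum) 1).map t).prod)
      = t A.card * Ft t (Fintype.card β - A.card) := by
    intro c _
    rw [← Finset.mul_sum, hE']
  rw [Finset.sum_congr rfl hrow, Finset.sum_const, nsmul_eq_mul]
  rw [hDdef]
  rw [card_D A x hx]

lemma count_subsets {β : Type*} [Fintype β] [DecidableEq β] (x : β) (i : ℕ) :
    ((Finset.univ.filter (fun A : Finset β => x ∈ A)).filter (fun A => A.card - 1 = i)).card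
      = (Fintype.card β - 1).choose i := by
  classical
  have : ((Finset.univ.filter (fun A : Finset β => x ∈ A)).filter
      (fun A => A.card - 1 = i)).card = (Finset.powersetCard i (Finset.univ.erase x)).card := by
    apply Finset.card_nbij' (i := fun A => A.erase x) (j := fun B => insert x B)
    · intro A hA
      simp only [Finset.mem_coe, Finset.mem_filter, Finset.mem_univ, true_and] at hA
      obtain ⟨hxA, hcA⟩ := hA
      rw [Finset.mem_coe, Finset.mem_powersetCard]
      constructor
      · exact Finset.erase_subset_erase x (Finset.subset_univ A)
      · rw [Finset.card_erase_of_mem hxA]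
        exact hcA
    · intro B hB
      rw [Finset.mem_coe, Finset.mem_powersetCard] at hB
      obtain ⟨hsub, hcB⟩ := hB
      have hxB : x ∉ B := fun h => (Finset.mem_erase.mp (hsub h)).1 rfl
      simp only [Finset.mem_coe, Finset.mem_filter, Finset.mem_univ, true_and]
      refine ⟨Finset.mem_insert_self x B, ?_⟩
      rw [Finset.card_insert_of_notMem hxB, hcB]
      omega
    · intro A hA
      simp only [Finset.mem_coe, Finset.mem_filter, Finset.mem_univ, true_and] at hA
      exact Finset.insert_erase hA.1
    · intro B hB
      rw [Finset.mem_coe, Finset.mem_powersetCard] at hB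
      have hxB : x ∉ B := fun h => (Finset.mem_erase.mp (hB.1 h)).1 rfl
      exact Finset.erase_insert hxB
  rw [this, Finset.card_powersetCard, Finset.card_erase_of_mem (Finset.mem_univ x),
    Finset.card_univ]

lemma Ft_succ (t : ℕ → ℝ) (n : ℕ) :
    Ft t (n + 1) = ∑ i ∈ Finset.range (n + 1),
      ((n.choose i * i.factorial : ℕ) : ℝ) * (t (i + 1) * Ft t (n - i)) := by
  classical
  have hcard : Fintype.card (Fin (n + 1)) = n + 1 := Fintype.card_fin _
  set x : Fin (n + 1) := 0 with hxdef
  have h1 : Ft t (n + 1) = ∑ A ∈ Finset.univ.filter (fun A : Finset (Fin (n+1)) => x ∈ A),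
      ∑ σ ∈ Finset.univ.filter
        (fun σ : Perm (Fin (n+1)) => (σ.cycleOf x).support ∪ {x} = A), Wt t σ := by
    unfold Ft
    rw [Finset.sum_fiberwise_of_maps_to]
    intro σ _
    simp only [Finset.mem_filter, Finset.mem_univ, true_and]
    exact Finset.mem_union_right _ (Finset.mem_singleton_self x)
  rw [h1]
  have h2 : ∀ A ∈ Finset.univ.filter (fun A : Finset (Fin (n+1)) => x ∈ A),
      (∑ σ ∈ Finset.univ.filter
        (fun σ : Perm (Fin (n+1)) => (σ.cycleOf x).support ∪ {x} = A), Wt t σ)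
      = (A.card - 1).factorial * (t A.card * Ft t (n + 1 - A.card)) := by
    intro A hA
    simp only [Finset.mem_coe, Finset.mem_filter, Finset.mem_univ, true_and] at hA
    rw [inner_sum t x A hA, hcard]
  rw [Finset.sum_congr rfl h2]
  rw [← Finset.sum_fiberwise_of_maps_to (g := fun A : Finset (Fin (n+1)) => A.card - 1)
    (t := Finset.range (n + 1)) (fun A hA => by
      simp only [Finset.mem_coe, Finset.mem_filter, Finset.mem_univ, true_and] at hA
      simp only [Finset.mem_range]
      have h3 : A.card ≤ n + 1 := by
        have := Finset.card_le_univ A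
        rwa [hcard] at this
      omega)]
  apply Finset.sum_congr rfl
  intro i hi
  have h4 : ∀ A ∈ (Finset.univ.filter (fun A : Finset (Fin (n+1)) => x ∈ A)).filter
      (fun A => A.card - 1 = i),
      (A.card - 1).factorial * (t A.card * Ft t (n + 1 - A.card))
        = i.factorial * (t (i + 1) * Ft t (n - i)) := by
    intro A hA
    simp only [Finset.mem_coe, Finset.mem_filter, Finset.mem_univ, true_and] at hA
    obtain ⟨hxA, hciA⟩ := hA
    have hge : 1 ≤ A.card := Finset.one_le_card.mpr ⟨x, hxA⟩
    have hcA : A.card = i + 1 := by omega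
    rw [hcA]
    have h5 : n + 1 - (i + 1) = n - i := by omega
    rw [h5]
    simp only [Nat.add_sub_cancel]
  rw [Finset.sum_congr rfl h4, Finset.sum_const, count_subsets x i, hcard, nsmul_eq_mul]
  simp only [Nat.add_sub_cancel]
  push_cast
  ring

lemma Ft_zero (t : ℕ → ℝ) : Ft t 0 = 1 := by
  have h : ∀ σ : Perm (Fin 0), Wt t σ = 1 := by
    intro σ
    have hσ : σ = 1 := Subsingleton.elim σ 1
    subst hσ
    simp [Wt]
  unfold Ft
  rw [Finset.sum_congr rfl (fun σ _ => h σ)]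
  simp [Fintype.card_perm]

lemma dvd_reindex (f : ℕ → ℝ) (w : ℝ) (n d : ℕ) (hd : 0 < d) :
    ∑ i ∈ Finset.range (n + 1), (if d ∣ (i + 1) then w else 0) * f (n - i)
      = w * ∑ j ∈ Finset.range ((n + 1) / d), f (n + 1 - d * (j + 1)) := by
  rw [Finset.mul_sum]
  have h1 : ∀ i ∈ Finset.range (n + 1),
      (if d ∣ (i + 1) then w else 0) * f (n - i) = if d ∣ (i + 1) then w * f (n - i) else 0 := by
    intro i _
    split <;> simp
  rw [Finset.sum_congr rfl h1, ← Finset.sum_filter]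
  refine Finset.sum_nbij' (i := fun i => (i + 1) / d - 1) (j := fun j => d * (j + 1) - 1)
    ?_ ?_ ?_ ?_ ?_
  · intro i hi
    simp only [Finset.mem_filter, Finset.mem_range] at hi ⊢
    obtain ⟨hin, c, hc⟩ := hi
    have hc1 : 1 ≤ c := by
      rcases Nat.eq_zero_or_pos c with h | h
      · rw [h, Nat.mul_zero] at hc; omega
      · exact h
    have hdc : (i + 1) / d = c := by rw [hc, Nat.mul_div_cancel_left c hd]
    rw [hdc]
    have : c ≤ (n + 1) / d := by
      rw [le_div_iff' hd]
      omega
    omega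
  · intro j hj
    simp only [Finset.mem_filter, Finset.mem_range] at hj ⊢
    rw [Nat.lt_iff_add_one_le, le_div_iff' hd] at hj
    have hpos : 1 ≤ d * (j + 1) := Nat.one_le_iff_ne_zero.mpr (by positivity)
    constructor
    · omega
    · exact ⟨j + 1, by omega⟩
  · intro i hi
    simp only [Finset.mem_filter, Finset.mem_range] at hi
    obtain ⟨hin, c, hc⟩ := hi
    have hc1 : 1 ≤ c := by
      rcases Nat.eq_zero_or_pos c with h | h
      · rw [h, Nat.mul_zero] at hc; omega
      · exact h
    have hdc : (i + 1) / d = c := by rw [hc, Nat.mul_div_cancel_left c hd]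
    rw [hdc]
    have e1 : c - 1 + 1 = c := by omega
    rw [e1]
    omega
  · intro j hj
    simp only [Finset.mem_range] at hj
    have hpos : 1 ≤ d * (j + 1) := Nat.one_le_iff_ne_zero.mpr (by positivity)
    have e1 : d * (j + 1) - 1 + 1 = d * (j + 1) := by omega
    rw [e1, Nat.mul_div_cancel_left _ hd]
    omega
  · intro i hi
    simp only [Finset.mem_filter, Finset.mem_range] at hi
    obtain ⟨hin, c, hc⟩ := hi
    have hc1 : 1 ≤ c := by
      rcases Nat.eq_zero_or_pos c with h | h
      · rw [h, Nat.mul_zero] at hc; omega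
      · exact h
    have hdc : (i + 1) / d = c := by rw [hc, Nat.mul_div_cancel_left c hd]
    rw [hdc]
    have e1 : c - 1 + 1 = c := by omega
    rw [e1]
    congr 2
    omega

lemma key_sum (q s : ℝ) (d : ℕ) (hd : 0 < d) (n : ℕ) :
    ∑ i ∈ Finset.range (n + 1),
        (if d ∣ (i + 1) then q else s) * Rr q s d (n - i)
      = ((n : ℝ) + 1) * Rr q s d (n + 1) := by
  have hsplit : ∀ i, (if d ∣ (i + 1) then q else s)
      = s + (if d ∣ (i + 1) then q - s else 0) := by
    intro i
    split <;> ring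
  have h1 : ∀ i ∈ Finset.range (n + 1),
      (if d ∣ (i + 1) then q else s) * Rr q s d (n - i)
        = s * Rr q s d (n - i) + (if d ∣ (i + 1) then q - s else 0) * Rr q s d (n - i) := by
    intro i _
    rw [hsplit i, add_mul]
  rw [Finset.sum_congr rfl h1, Finset.sum_add_distrib]
  rw [dvd_reindex (fun m => Rr q s d m) (q - s) n d hd]
  have h2 : ∑ i ∈ Finset.range (n + 1), s * Rr q s d (n - i)
      = s * ∑ j ∈ Finset.range (n + 1), Rr q s d j := by
    rw [Finset.mul_sum]
    have := Finset.sum_range_reflect (fun j => s * Rr q s d j) (n + 1)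
    simpa using this
  rw [h2]
  have h3 := Rr_recur q s d hd (n + 1)
  push_cast at h3 ⊢
  linarith [h3]

theorem Ft_eq_Rr (q s : ℝ) (d : ℕ) (hd : 0 < d) (m : ℕ) :
    Ft (fun i => if d ∣ i then q else s) m = (m.factorial : ℝ) * Rr q s d m := by
  induction m using Nat.strong_induction_on with
  | _ m ih =>
    match m with
    | 0 => rw [Ft_zero, Rr_zero]; simp
    | Nat.succ n =>
      rw [Ft_succ]
      have hterm : ∀ i ∈ Finset.range (n + 1),
          ((n.choose i * i.factorial : ℕ) : ℝ)
              * ((if d ∣ (i + 1) then q else s) * Ft (fun i => if d ∣ i then q else s) (n - i))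
            = (n.factorial : ℝ) * ((if d ∣ (i + 1) then q else s) * Rr q s d (n - i)) := by
        intro i hi
        simp only [Finset.mem_range] at hi
        rw [ih (n - i) (by omega)]
        have hcc : n.choose i * i.factorial * (n - i).factorial = n.factorial :=
          Nat.choose_mul_factorial_mul_factorial (by omega)
        push_cast [← hcc]
        ring
      rw [Finset.sum_congr rfl hterm, ← Finset.mul_sum]
      rw [key_sum q s d hd n]
      rw [Nat.factorial_succ]
      push_cast
      ring

/-- the partition attached to a permutation -/
def toPart {k : ℕ} (σ : Perm (Fin k)) : Nat.Partition k where
  parts := fullCycleType σ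
  parts_pos := by
    intro i hi
    rcases Multiset.mem_add.mp hi with h | h
    · have := Equiv.Perm.two_le_of_mem_cycleType h
      omega
    · rw [Multiset.eq_of_mem_replicate h]
      exact Nat.one_pos
  parts_sum := by
    unfold fullCycleType
    rw [Multiset.sum_add, Equiv.Perm.sum_cycleType, Multiset.sum_replicate, smul_eq_mul,
      mul_one]
    have h : σ.support.card ≤ k := by
      have := Finset.card_le_univ σ.support
      rwa [Fintype.card_fin] at this
    omega

lemma toPart_parts {k : ℕ} (σ : Perm (Fin k)) : (toPart σ).parts = fullCycleType σ := rfl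

lemma Wt_eq_fullCycleType (t : ℕ → ℝ) {k : ℕ} (σ : Perm (Fin k)) :
    Wt t σ = ((fullCycleType σ).map t).prod := by
  unfold Wt fullCycleType
  rw [Equiv.Perm.sum_cycleType, Fintype.card_fin]

theorem partition_sum_eq_Ft (k : ℕ) (t : ℕ → ℝ) :
    (∑ P : Nat.Partition k, (permCountOfType P : ℝ) * ((P.parts.map t).prod)) = Ft t k := by
  classical
  have hcount : ∀ P : Nat.Partition k, (permCountOfType P : ℕ)
      = (Finset.univ.filter (fun σ : Perm (Fin k) => toPart σ = P)).card := by
    intro P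
    unfold permCountOfType
    rw [Nat.card_eq_fintype_card, Fintype.card_subtype]
    congr 1
    apply Finset.filter_congr
    intro σ _
    constructor
    · intro h
      exact Nat.Partition.ext h
    · intro h
      rw [← toPart_parts σ, h]
  have h1 : ∀ P : Nat.Partition k,
      (permCountOfType P : ℝ) * ((P.parts.map t).prod)
        = ∑ σ ∈ Finset.univ.filter (fun σ : Perm (Fin k) => toPart σ = P), Wt t σ := by
    intro P
    have h2 : ∀ σ ∈ Finset.univ.filter (fun σ : Perm (Fin k) => toPart σ = P),
        Wt t σ = ((P.parts.map t).prod) := by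
      intro σ hσ
      simp only [Finset.mem_filter, Finset.mem_univ, true_and] at hσ
      rw [Wt_eq_fullCycleType, ← toPart_parts σ, hσ]
    rw [Finset.sum_congr rfl h2, Finset.sum_const, nsmul_eq_mul, hcount P]
  rw [Finset.sum_congr rfl (fun P _ => h1 P)]
  unfold Ft
  exact Finset.sum_fiberwise_of_maps_to (fun σ _ => Finset.mem_univ _) (Wt t)

end LiWan


/-- Li–Wan combinatorial identity: if `t_i = q` when `d ∣ i` and `t_i = s`
otherwise, then `C_k(t_1, …, t_k) = k! ∑_{i=0}^{⌊k/d⌋} C((q-s)/d + i - 1, i) ·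
C(s + k - d·i - 1, k - d·i)`. -/
theorem liWan_cycle_type_sum_eq (k d : ℕ) (hk : 1 ≤ k) (hd : 1 ≤ d) (q s : ℝ)
    (hs : 0 ≤ s) (hsq : s ≤ q) (hdq : (d : ℝ) ≤ q) :
    (∑ P : Nat.Partition k, (permCountOfType P : ℝ) *
        (P.parts.map (fun i => if d ∣ i then q else s)).prod) =
      (k.factorial : ℝ) * ∑ i ∈ Finset.range (k / d + 1),
        genBinom ((q - s) / d + i - 1) i *
          genBinom (s + (k : ℝ) - d * i - 1) (k - d * i) := by
  rw [LiWan.partition_sum_eq_Ft k (fun i => if d ∣ i then q else s)]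
  rw [LiWan.Ft_eq_Rr q s d hd k]
  congr 1
  unfold LiWan.Rr
  apply Finset.sum_congr rfl
  intro i hi
  simp only [Finset.mem_range, Nat.lt_succ_iff] at hi
  rw [LiWan.le_div_iff' hd] at hi
  unfold LiWan.aa
  congr 2
  rw [Nat.cast_sub hi]
  push_cast
  ring
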